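/- Let d ∈ ℕ. For all vectors x, y ∈ ℝᵈ, ⟨log(e + |x|²)|x|²x − log(e + |y|²)|y|²y, x − y⟩ ≥ 0, where ⟨·,·⟩ denotes the Euclidean inner product and |·| the Euclidean norm. -/
import Mathlib


open Real

lemma g_mono_aux {a b : ℝ} (hb : 0 ≤ b) (hab : b ≤ a) :
    Real.log (Real.exp 1 + b ^ 2) * b ^ 3 ≤ Real.log (Real.exp 1 + a ^ 2) * a ^ 3 := by
  have he : (1 : ℝ) ≤ Real.exp 1 := Real.one_le_exp (by norm_num)
  have h1 : Real.log (Real.exp 1 + b ^ 2) ≤ Real.log (Real.exp 1 + a ^ 2) := by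
    apply Real.log_le_log (by positivity)
    nlinarith
  have h2 : b ^ 3 ≤ a ^ 3 := pow_le_pow_left₀ hb hab 3
  have h3 : 0 ≤ Real.log (Real.exp 1 + b ^ 2) := Real.log_nonneg (by nlinarith)
  exact mul_le_mul h1 h2 (by positivity) (le_trans h3 (le_of_eq rfl) |>.trans h1)

theorem log_damping_monotone (d : ℕ) (x y : EuclideanSpace ℝ (Fin d)) :
    0 ≤ @inner ℝ _ _
      ((Real.log (Real.exp 1 + ‖x‖ ^ 2) * ‖x‖ ^ 2) • x
        - (Real.log (Real.exp 1 + ‖y‖ ^ 2) * ‖y‖ ^ 2) • y) (x - y) := by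
  have ha : (0:ℝ) ≤ ‖x‖ := norm_nonneg x
  have hb : (0:ℝ) ≤ ‖y‖ := norm_nonneg y
  have he : (1 : ℝ) ≤ Real.exp 1 := Real.one_le_exp (by norm_num)
  have hA : 0 ≤ Real.log (Real.exp 1 + ‖x‖ ^ 2) := Real.log_nonneg (by nlinarith)
  have hB : 0 ≤ Real.log (Real.exp 1 + ‖y‖ ^ 2) := Real.log_nonneg (by nlinarith)
  have hxy : @inner ℝ _ _ x y ≤ ‖x‖ * ‖y‖ := real_inner_le_norm x y
  have key : ∀ a b : ℝ, 0 ≤ a → 0 ≤ b →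
      0 ≤ (a - b) * (Real.log (Real.exp 1 + a ^ 2) * a ^ 3
        - Real.log (Real.exp 1 + b ^ 2) * b ^ 3) := by
    intro a b ha' hb'
    rcases le_total b a with h | h
    · exact mul_nonneg (by linarith) (by linarith [g_mono_aux hb' h])
    · have h2 := mul_nonneg (sub_nonneg.2 h) (sub_nonneg.2 (g_mono_aux ha' h))
      nlinarith [h2]
  have hkey := key ‖x‖ ‖y‖ ha hb
  rw [inner_sub_left, inner_sub_right, inner_sub_right, real_inner_smul_left,
    real_inner_smul_left, real_inner_smul_left, real_inner_smul_left,
    real_inner_self_eq_norm_sq, real_inner_self_eq_norm_sq, real_inner_comm y x]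
  have hyx : @inner ℝ _ _ y x ≤ ‖x‖ * ‖y‖ := by
    rw [real_inner_comm]; exact hxy
  have hA' : 0 ≤ Real.log (Real.exp 1 + ‖x‖ ^ 2) * ‖x‖ ^ 2 := by positivity
  have hB' : 0 ≤ Real.log (Real.exp 1 + ‖y‖ ^ 2) * ‖y‖ ^ 2 := by positivity
  nlinarith [hkey, mul_le_mul_of_nonneg_left hyx hA', mul_le_mul_of_nonneg_left hyx hB']
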